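/- Let R be a commutative ring. If 4×4 by 4×4 matrix multiplication over R admits a bilinear algorithm with a multiplications, 4×4 by 4×3 matrix multiplication over R admits a bilinear algorithm with b multiplications, and 3×3 by 3×4 matrix multiplication over R admits a bilinear algorithm with c multiplications, then 7×7 by 7×7 matrix multiplication over R admits a bilinear algorithm with a + 3b + 3c multiplications; i.e., ⟨7,7,7⟩ ≤ ⟨4,4,4⟩ + 3⟨4,4,3⟩ + 3⟨3,3,4⟩. -/

import Mathlib

/-- A bilinear (non-commutative) algorithm computing `u×v` by `v×w` matrix
multiplication over `R` with `r` multiplications: there are `R`-linear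
functionals `f i` on `u×v` matrices, `R`-linear functionals `g i` on `v×w`
matrices, and `u×w` matrices `C i` such that `A * B = ∑ i, f i A * g i B • C i`
for all `A`, `B`. -/
def BilinearAlgorithm (R : Type*) [CommRing R] (u v w r : ℕ) : Prop :=
  ∃ (f : Fin r → (Matrix (Fin u) (Fin v) R →ₗ[R] R))
    (g : Fin r → (Matrix (Fin v) (Fin w) R →ₗ[R] R))
    (C : Fin r → Matrix (Fin u) (Fin w) R),
    ∀ (A : Matrix (Fin u) (Fin v) R) (B : Matrix (Fin v) (Fin w) R),
      A * B = ∑ i, (f i A * g i B) • C i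

set_option linter.unusedSectionVars false

section Aux

variable {R : Type*} [CommRing R]

/-- left-multiplication by a fixed matrix, as a linear map -/
def lmulLM {a b c : ℕ} (X : Matrix (Fin a) (Fin b) R) :
    Matrix (Fin b) (Fin c) R →ₗ[R] Matrix (Fin a) (Fin c) R where
  toFun A := X * A
  map_add' := by intro x y; show X * (x + y) = _; rw [Matrix.mul_add]
  map_smul' := by intro m x; show X * (m • x) = _; rw [Matrix.mul_smul]; rfl

/-- right-multiplication by a fixed matrix, as a linear map -/
def rmulLM {a b c : ℕ} (Y : Matrix (Fin b) (Fin c) R) :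
    Matrix (Fin a) (Fin b) R →ₗ[R] Matrix (Fin a) (Fin c) R where
  toFun A := A * Y
  map_add' := by intro x y; show (x + y) * Y = _; rw [Matrix.add_mul]
  map_smul' := by intro m x; show (m • x) * Y = _; rw [Matrix.smul_mul]; rfl

@[simp] lemma lmulLM_apply {a b c : ℕ} (X : Matrix (Fin a) (Fin b) R)
    (A : Matrix (Fin b) (Fin c) R) : lmulLM X A = X * A := rfl

@[simp] lemma rmulLM_apply {a b c : ℕ} (Y : Matrix (Fin b) (Fin c) R)
    (A : Matrix (Fin a) (Fin b) R) : rmulLM Y A = A * Y := rfl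

/-- transpose as a linear map -/
def trLM (m n : ℕ) : Matrix (Fin m) (Fin n) R →ₗ[R] Matrix (Fin n) (Fin m) R where
  toFun A := A.transpose
  map_add' := by intros; ext; simp
  map_smul' := by intros; ext; simp

lemma BA.transpose {u v w r : ℕ} (h : BilinearAlgorithm R u v w r) :
    BilinearAlgorithm R w v u r := by
  obtain ⟨f, g, C, hfgc⟩ := h
  refine ⟨fun i => (g i).comp (trLM w v), fun i => (f i).comp (trLM v u),
    fun i => (C i).transpose, fun A B => ?_⟩
  have h1 : A * B = ((B.transpose) * (A.transpose)).transpose := by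
    rw [← Matrix.transpose_mul, Matrix.transpose_transpose]
  rw [h1, hfgc, Matrix.transpose_sum]
  refine Finset.sum_congr rfl fun i _ => ?_
  rw [Matrix.transpose_smul]
  simp [trLM, mul_comm]

lemma trace_stdBasis_mul {u v : ℕ} (i : Fin u) (j : Fin v) (M : Matrix (Fin v) (Fin u) R) :
    (Matrix.single i j (1 : R) * M).trace = M j i := by
  rw [Matrix.trace, Finset.sum_eq_single i]
  · simp [Matrix.diag, Matrix.mul_apply, Matrix.single]
  · intro k _ hk
    simp [Matrix.diag, Matrix.mul_apply, Matrix.single, hk.symm]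
  · simp

lemma BA.rotate {u v w r : ℕ} (h : BilinearAlgorithm R u v w r) :
    BilinearAlgorithm R v w u r := by
  obtain ⟨f, g, C, hfgc⟩ := h
  refine ⟨g, fun i => (Matrix.traceLinearMap (Fin u) R R).comp (lmulLM (C i)),
    fun i => Matrix.of (fun j k => f i (Matrix.single k j (1:R))), fun A B => ?_⟩
  ext j k
  have key := congrArg (fun (M : Matrix (Fin u) (Fin w) R) => (M * B).trace) (hfgc (Matrix.single k j (1:R)) A)
  beta_reduce at key
  rw [Matrix.mul_assoc, trace_stdBasis_mul] at key
  rw [key, Matrix.sum_mul, Matrix.trace_sum, Matrix.sum_apply]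
  refine Finset.sum_congr rfl fun t _ => ?_
  rw [Matrix.smul_mul, Matrix.trace_smul]
  simp only [Matrix.smul_apply, lmulLM, LinearMap.comp_apply, LinearMap.coe_mk, AddHom.coe_mk,
    Matrix.traceLinearMap_apply, Matrix.of_apply, smul_eq_mul]
  ring

/-- `φ` is computed by a bilinear algorithm with `r` multiplications. -/
def Computes (u v w r : ℕ)
    (φ : Matrix (Fin u) (Fin v) R → Matrix (Fin v) (Fin w) R → Matrix (Fin u) (Fin w) R) :
    Prop :=
  ∃ (f : Fin r → (Matrix (Fin u) (Fin v) R →ₗ[R] R))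
    (g : Fin r → (Matrix (Fin v) (Fin w) R →ₗ[R] R))
    (C : Fin r → Matrix (Fin u) (Fin w) R),
    ∀ A B, φ A B = ∑ i, (f i A * g i B) • C i

lemma computes_add {u v w r s : ℕ} {φ ψ}
    (hφ : Computes (R := R) u v w r φ) (hψ : Computes (R := R) u v w s ψ) :
    Computes (R := R) u v w (r + s) (fun A B => φ A B + ψ A B) := by
  obtain ⟨f1, g1, C1, h1⟩ := hφ
  obtain ⟨f2, g2, C2, h2⟩ := hψ
  refine ⟨Fin.append f1 f2, Fin.append g1 g2, Fin.append C1 C2, fun A B => ?_⟩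
  rw [Fin.sum_univ_add]
  simp only [Fin.append_left, Fin.append_right]
  rw [h1, h2]

lemma computes_congr {u v w r : ℕ} {φ ψ}
    (hφ : Computes (R := R) u v w r φ) (h : ∀ A B, φ A B = ψ A B) :
    Computes (R := R) u v w r ψ := by
  obtain ⟨f, g, C, h1⟩ := hφ
  exact ⟨f, g, C, fun A B => (h A B) ▸ h1 A B⟩

lemma computes_cast {u v w r r' : ℕ} {φ} (h : r = r')
    (hφ : Computes (R := R) u v w r φ) : Computes (R := R) u v w r' φ := h ▸ hφ

/-- a bilinear algorithm computes any sandwiched product -/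
lemma computes_sandwich {u v w r u' v' w' : ℕ}
    (h : BilinearAlgorithm R u v w r)
    (P : Matrix (Fin u') (Fin v') R →ₗ[R] Matrix (Fin u) (Fin v) R)
    (Q : Matrix (Fin v') (Fin w') R →ₗ[R] Matrix (Fin v) (Fin w) R)
    (S : Matrix (Fin u) (Fin w) R →ₗ[R] Matrix (Fin u') (Fin w') R) :
    Computes (R := R) u' v' w' r (fun A B => S (P A * Q B)) := by
  obtain ⟨f, g, C, hfgc⟩ := h
  refine ⟨fun i => (f i).comp P, fun i => (g i).comp Q, fun i => S (C i), fun A B => ?_⟩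
  simp only [LinearMap.comp_apply]
  rw [hfgc, map_sum]
  refine Finset.sum_congr rfl fun i _ => ?_
  rw [map_smul]

end Aux

section Main

variable {R : Type*} [CommRing R]

/-- the equivalence `Fin 4 ⊕ Fin 3 ≃ Fin 7` -/
def eE : Fin 4 ⊕ Fin 3 ≃ Fin 7 := finSumFinEquiv

def i1 : Fin 4 → Fin 7 := fun i => eE (Sum.inl i)
def i2 : Fin 3 → Fin 7 := fun i => eE (Sum.inr i)

/-- submatrix as a linear map -/
def subLM {p q : ℕ} (f : Fin p → Fin 7) (g : Fin q → Fin 7) :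
    Matrix (Fin 7) (Fin 7) R →ₗ[R] Matrix (Fin p) (Fin q) R where
  toFun A := A.submatrix f g
  map_add' := by intros; rfl
  map_smul' := by intros; rfl

@[simp] lemma subLM_apply {p q : ℕ} (f : Fin p → Fin 7) (g : Fin q → Fin 7)
    (A : Matrix (Fin 7) (Fin 7) R) : subLM f g A = A.submatrix f g := rfl

/-- reassemble a block matrix into a `7×7` matrix -/
def downLM : Matrix (Fin 4 ⊕ Fin 3) (Fin 4 ⊕ Fin 3) R →ₗ[R] Matrix (Fin 7) (Fin 7) R where
  toFun X := X.submatrix eE.symm eE.symm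
  map_add' := by intros; rfl
  map_smul' := by intros; rfl

@[simp] lemma downLM_apply (X : Matrix (Fin 4 ⊕ Fin 3) (Fin 4 ⊕ Fin 3) R) :
    downLM X = X.submatrix eE.symm eE.symm := rfl

def slot11 : Matrix (Fin 4) (Fin 4) R →ₗ[R] Matrix (Fin 4 ⊕ Fin 3) (Fin 4 ⊕ Fin 3) R where
  toFun X := Matrix.fromBlocks X 0 0 0
  map_add' := by intros; simp [Matrix.fromBlocks_add, Matrix.fromBlocks_inj]
  map_smul' := by intros; simp [Matrix.fromBlocks_smul, Matrix.fromBlocks_inj]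

def slot12 : Matrix (Fin 4) (Fin 3) R →ₗ[R] Matrix (Fin 4 ⊕ Fin 3) (Fin 4 ⊕ Fin 3) R where
  toFun X := Matrix.fromBlocks 0 X 0 0
  map_add' := by intros; simp [Matrix.fromBlocks_add, Matrix.fromBlocks_inj]
  map_smul' := by intros; simp [Matrix.fromBlocks_smul, Matrix.fromBlocks_inj]

def slot21 : Matrix (Fin 3) (Fin 4) R →ₗ[R] Matrix (Fin 4 ⊕ Fin 3) (Fin 4 ⊕ Fin 3) R where
  toFun X := Matrix.fromBlocks 0 0 X 0
  map_add' := by intros; simp [Matrix.fromBlocks_add, Matrix.fromBlocks_inj]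
  map_smul' := by intros; simp [Matrix.fromBlocks_smul, Matrix.fromBlocks_inj]

def slot22 : Matrix (Fin 3) (Fin 3) R →ₗ[R] Matrix (Fin 4 ⊕ Fin 3) (Fin 4 ⊕ Fin 3) R where
  toFun X := Matrix.fromBlocks 0 0 0 X
  map_add' := by intros; simp [Matrix.fromBlocks_add, Matrix.fromBlocks_inj]
  map_smul' := by intros; simp [Matrix.fromBlocks_smul, Matrix.fromBlocks_inj]

@[simp] lemma slot11_apply (X : Matrix (Fin 4) (Fin 4) R) :
    slot11 X = Matrix.fromBlocks X 0 0 0 := rfl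
@[simp] lemma slot12_apply (X : Matrix (Fin 4) (Fin 3) R) :
    slot12 X = Matrix.fromBlocks 0 X 0 0 := rfl
@[simp] lemma slot21_apply (X : Matrix (Fin 3) (Fin 4) R) :
    slot21 X = Matrix.fromBlocks 0 0 X 0 := rfl
@[simp] lemma slot22_apply (X : Matrix (Fin 3) (Fin 3) R) :
    slot22 X = Matrix.fromBlocks 0 0 0 X := rfl

/-- the `4×3` padding matrix -/
def Jp : Matrix (Fin 4) (Fin 3) R :=
  Matrix.of fun i j => if (i : ℕ) = (j : ℕ) then 1 else 0

lemma hJ : (Jp (R := R)).transpose * (Jp (R := R)) = (1 : Matrix (Fin 3) (Fin 3) R) := by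
  ext i j
  fin_cases i <;> fin_cases j <;>
    simp [Jp, Matrix.mul_apply, Fin.sum_univ_succ, Matrix.one_apply, Matrix.transpose_apply]

lemma hJ1 {n : ℕ} (X : Matrix (Fin 3) (Fin n) R) :
    (Jp (R := R)).transpose * ((Jp (R := R)) * X) = X := by
  rw [← Matrix.mul_assoc, hJ, Matrix.one_mul]

lemma upBlocks (A : Matrix (Fin 7) (Fin 7) R) :
    A.submatrix ⇑eE ⇑eE =
      Matrix.fromBlocks (A.submatrix i1 i1) (A.submatrix i1 i2)
        (A.submatrix i2 i1) (A.submatrix i2 i2) := by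
  ext (i | i) (j | j) <;> rfl

end Main

section Scheme

variable {R : Type*} [CommRing R]

local notation "M7" => Matrix (Fin 7) (Fin 7) R

-- A-side maps
def P1 : M7 →ₗ[R] Matrix (Fin 4) (Fin 4) R :=
  subLM i1 i1 + (lmulLM Jp).comp ((rmulLM Jp.transpose).comp (subLM i2 i2))
def P2 : M7 →ₗ[R] Matrix (Fin 3) (Fin 4) R :=
  subLM i2 i1 + (rmulLM Jp.transpose).comp (subLM i2 i2)
def P3 : M7 →ₗ[R] Matrix (Fin 4) (Fin 4) R := subLM i1 i1
def P4 : M7 →ₗ[R] Matrix (Fin 4) (Fin 3) R :=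
  subLM i1 i2 - (lmulLM Jp).comp (subLM i2 i2)
def P5 : M7 →ₗ[R] Matrix (Fin 3) (Fin 3) R := subLM i2 i2
def P6 : M7 →ₗ[R] Matrix (Fin 4) (Fin 3) R :=
  (rmulLM Jp).comp (subLM i1 i1) + subLM i1 i2
def P7 : M7 →ₗ[R] Matrix (Fin 3) (Fin 4) R :=
  subLM i2 i1 - (lmulLM Jp.transpose).comp (subLM i1 i1)

-- B-side maps
def Q1 : M7 →ₗ[R] Matrix (Fin 4) (Fin 4) R := P1
def Q2 : M7 →ₗ[R] Matrix (Fin 4) (Fin 4) R := subLM i1 i1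
def Q3 : M7 →ₗ[R] Matrix (Fin 4) (Fin 3) R :=
  subLM i1 i2 - (lmulLM Jp).comp (subLM i2 i2)
def Q4 : M7 →ₗ[R] Matrix (Fin 3) (Fin 4) R :=
  subLM i2 i1 + (rmulLM Jp.transpose).comp (subLM i2 i2)
def Q5 : M7 →ₗ[R] Matrix (Fin 3) (Fin 4) R :=
  subLM i2 i1 - (lmulLM Jp.transpose).comp (subLM i1 i1)
def Q6 : M7 →ₗ[R] Matrix (Fin 3) (Fin 3) R := subLM i2 i2
def Q7 : M7 →ₗ[R] Matrix (Fin 4) (Fin 3) R :=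
  (rmulLM Jp).comp (subLM i1 i1) + subLM i1 i2

-- placement maps
def S1 : Matrix (Fin 4) (Fin 4) R →ₗ[R] M7 :=
  downLM.comp (slot11 + slot22.comp ((lmulLM Jp.transpose).comp (rmulLM Jp)))
def S2 : Matrix (Fin 3) (Fin 4) R →ₗ[R] M7 :=
  downLM.comp (slot21 + slot22.comp (rmulLM (-Jp)))
def S3 : Matrix (Fin 4) (Fin 3) R →ₗ[R] M7 :=
  downLM.comp (slot12 + slot22.comp (lmulLM Jp.transpose))
def S4 : Matrix (Fin 4) (Fin 4) R →ₗ[R] M7 := downLM.comp slot11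
def S5 : Matrix (Fin 3) (Fin 4) R →ₗ[R] M7 :=
  downLM.comp (slot11.comp (lmulLM Jp) + slot21)
def S6 : Matrix (Fin 4) (Fin 3) R →ₗ[R] M7 :=
  downLM.comp (slot11.comp (rmulLM (-Jp.transpose)) + slot12)
def S7 : Matrix (Fin 3) (Fin 3) R →ₗ[R] M7 := downLM.comp slot22

lemma subm_add {p q : ℕ} (f : Fin p → Fin 4 ⊕ Fin 3) (g : Fin q → Fin 4 ⊕ Fin 3)
    (X Y : Matrix (Fin 4 ⊕ Fin 3) (Fin 4 ⊕ Fin 3) R) :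
    X.submatrix f g + Y.submatrix f g = (X + Y).submatrix f g := rfl

lemma mainEq (A B : M7) :
    A * B = S1 (P1 A * Q1 B) + (S2 (P2 A * Q2 B) + (S3 (P3 A * Q3 B) +
      (S4 (P4 A * Q4 B) + (S5 (P5 A * Q5 B) + (S6 (P6 A * Q6 B) + S7 (P7 A * Q7 B)))))) := by
  have h0 : A * B = ((A.submatrix ⇑eE ⇑eE) * (B.submatrix ⇑eE ⇑eE)).submatrix
      (⇑eE.symm) (⇑eE.symm) := by
    rw [Matrix.submatrix_mul_equiv, Matrix.submatrix_submatrix]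
    simp
  rw [h0, upBlocks A, upBlocks B, Matrix.fromBlocks_multiply]
  simp only [P1, P2, P3, P4, P5, P6, P7, Q1, Q2, Q3, Q4, Q5, Q6, Q7,
    S1, S2, S3, S4, S5, S6, S7, LinearMap.add_apply, LinearMap.sub_apply,
    LinearMap.comp_apply, subLM_apply, downLM_apply, lmulLM_apply, rmulLM_apply,
    slot11_apply, slot12_apply, slot21_apply, slot22_apply]
  simp only [subm_add]
  refine congrArg (fun (M : Matrix (Fin 4 ⊕ Fin 3) (Fin 4 ⊕ Fin 3) R) => M.submatrix (⇑eE.symm) (⇑eE.symm)) ?_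
  simp only [Matrix.fromBlocks_add, add_zero, zero_add]
  rw [Matrix.fromBlocks_inj]
  refine ⟨?_, ?_, ?_, ?_⟩ <;>
  · simp only [Matrix.mul_add, Matrix.add_mul, Matrix.mul_sub, Matrix.sub_mul,
      Matrix.neg_mul, Matrix.mul_neg, Matrix.mul_assoc, hJ, hJ1, Matrix.mul_one]
    abel

end Scheme


theorem bilinearAlgorithm_seven (R : Type*) [CommRing R] (a b c : ℕ)
    (ha : BilinearAlgorithm R 4 4 4 a)
    (hb : BilinearAlgorithm R 4 4 3 b)
    (hc : BilinearAlgorithm R 3 3 4 c) :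
    BilinearAlgorithm R 7 7 7 (a + 3 * b + 3 * c) := by
  have h1 := computes_sandwich ha P1 Q1 S1
  have h2 := computes_sandwich (BA.transpose hb) P2 Q2 S2
  have h3 := computes_sandwich hb P3 Q3 S3
  have h4 := computes_sandwich (BA.rotate hb) P4 Q4 S4
  have h5 := computes_sandwich hc P5 Q5 S5
  have h6 := computes_sandwich (BA.transpose hc) P6 Q6 S6
  have h7 := computes_sandwich (BA.rotate hc) P7 Q7 S7
  have hsum := computes_add h1 (computes_add h2 (computes_add h3 (computes_add h4
    (computes_add h5 (computes_add h6 h7)))))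
  have hsum' := computes_cast (show a + (b + (b + (b + (c + (c + c))))) = a + 3 * b + 3 * c by ring) hsum
  have hfin := computes_congr hsum' (fun A B => (mainEq A B).symm)
  obtain ⟨f, g, C, h⟩ := hfin
  exact ⟨f, g, C, h⟩
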